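/- For the FI-module shift functor Σ and each i ≥ 0, there is an isomorphism of FI-modules Σ(M(i)) ≅ M(i) ⊕ M(i−1)^{⊕ i}, where M(i) denotes the k-linearization of the representable functor FI(i,−). -/

import Mathlib

open CategoryTheory CategoryTheory.Limits

def FI : Type := ℕ
def FI.of : ℕ → FI := id
def FI.n : FI → ℕ := id
instance : Category FI where
  Hom m n := Fin m.n ↪ Fin n.n
  id _ := Function.Embedding.refl _
  comp f g := f.trans g
  id_comp _ := rfl
  comp_id _ := rfl
  assoc _ _ _ := rfl
abbrev FIMod (k : Type) [CommRing k] := FI ⥤ ModuleCat.{0} k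

/-- Extension of an injection `[m] → [n]` to `[m+1] → [n+1]` fixing the new first point. -/
def extEmb {m n : ℕ} (f : Fin m ↪ Fin n) : Fin (m + 1) ↪ Fin (n + 1) :=
  ⟨fun x => Fin.cases 0 (fun r => (f r).succ) x, by
    intro a b h
    induction a using Fin.cases with
    | zero =>
      induction b using Fin.cases with
      | zero => rfl
      | succ j => simp at h; exact absurd h.symm (Fin.succ_ne_zero _)
    | succ i =>
      induction b using Fin.cases with
      | zero => simp at h
      | succ j =>
        simp only [Fin.cases_succ] at h
        exact congrArg Fin.succ (f.injective (Fin.succ_injective _ h))⟩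

@[simp] lemma extEmb_zero {m n : ℕ} (f : Fin m ↪ Fin n) : extEmb f 0 = 0 := rfl
@[simp] lemma extEmb_succ {m n : ℕ} (f : Fin m ↪ Fin n) (r : Fin m) :
    extEmb f r.succ = (f r).succ := by
  show @Fin.cases m (fun _ => Fin (n + 1)) 0 (fun r => (f r).succ) r.succ = _
  rw [Fin.cases_succ]

/-- Extensionality for morphisms in `FI`. -/
lemma FI.hom_ext {m n : FI} {f g : Fin m.n ↪ Fin n.n} (h : ∀ x, f x = g x) :
    f = g := DFunLike.ext f g h

/-- The self-embedding `ι : FI → FI`, `[n] ↦ [n+1]`. -/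
def iota : FI ⥤ FI where
  obj n := FI.of (n.n + 1)
  map f := extEmb f
  map_id n := by
    refine FI.hom_ext fun x => ?_
    induction x using Fin.cases <;> rfl
  map_comp {a b c} f g := by
    refine FI.hom_ext fun x => ?_
    induction x using Fin.cases with
    | zero => rfl
    | succ i =>
      show extEmb (f.trans g) i.succ = extEmb g (extEmb f i.succ)
      simp

variable (k : Type) [CommRing k]

/-- The shift functor `Σ` on `FI`-modules. -/
def shiftF : FIMod k ⥤ FIMod k := (Functor.whiskeringLeft FI FI (ModuleCat k)).obj iota

/-- The natural transformation `Id → ι` given by the inclusions `[n] ↪ [n+1]`, `r ↦ r+1`. -/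
def piTrans : 𝟭 FI ⟶ iota where
  app n := ⟨Fin.succ, Fin.succ_injective _⟩
  naturality m n f := by
    refine FI.hom_ext fun x => ?_
    exact (extEmb_succ f x).symm

/-- The natural map `V → ΣV`. -/
def toShift (V : FIMod k) : V ⟶ (shiftF k).obj V :=
  V.leftUnitor.inv ≫ Functor.whiskerRight piTrans V

/-- `V → ΣV` as a natural transformation of endofunctors. -/
def natToShift : 𝟭 (FIMod k) ⟶ shiftF k where
  app V := toShift k V
  naturality V W φ := by
    ext n
    simp only [Functor.id_obj, Functor.id_map, toShift, shiftF, Functor.whiskeringLeft_obj_obj,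
      Functor.comp_obj, Category.assoc, NatTrans.comp_app, Functor.leftUnitor_inv_app,
      Functor.whiskerRight_app, Functor.whiskeringLeft_obj_map, Functor.whiskerLeft_app,
      Category.id_comp]
    exact LinearMap.congr_fun (congrArg ModuleCat.Hom.hom (φ.naturality (piTrans.app n)).symm) _

/-- The derivative `DV`, the cokernel of `V → ΣV`. -/
noncomputable def Dobj (V : FIMod k) : FIMod k := cokernel (toShift k V)

/-- The derivative functor `D`. -/
noncomputable def Dfun : FIMod k ⥤ FIMod k where
  obj V := Dobj k V
  map {V W} φ := cokernel.map _ _ φ ((shiftF k).map φ) ((natToShift k).naturality φ).symm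
  map_id V := by
    apply coequalizer.hom_ext
    simp [Dobj]
  map_comp {U V W} φ ψ := by
    apply coequalizer.hom_ext
    simp [Dobj]

variable (k : Type) [CommRing k]

/-- An `FI`-submodule of an `FI`-module. -/
structure FISub {k : Type} [CommRing k] (V : FIMod k) where
  sub : ∀ n : FI, Submodule k (V.obj n)
  map_mem : ∀ {m n : FI} (f : m ⟶ n) (v : V.obj m), v ∈ sub m → (V.map f) v ∈ sub n

/-- `V` is generated in degrees `≤ N`. -/
def GeneratedIn {k : Type} [CommRing k] (V : FIMod k) (N : ℕ) : Prop :=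
  ∀ W : FISub V, (∀ i : ℕ, i ≤ N → ∀ v : V.obj (FI.of i), v ∈ W.sub (FI.of i)) →
    ∀ (n : FI) (v : V.obj n), v ∈ W.sub n

/-- `V` is a finitely generated `FI`-module. -/
def FG {k : Type} [CommRing k] (V : FIMod k) : Prop :=
  ∃ S : Finset ((n : ℕ) × V.obj (FI.of n)),
    ∀ W : FISub V, (∀ s ∈ S, s.2 ∈ W.sub (FI.of s.1)) → ∀ (n : FI) (v : V.obj n), v ∈ W.sub n

/-- `V` is torsionless: no nonzero element is killed by an injection. -/
def Torsionless {k : Type} [CommRing k] (V : FIMod k) : Prop :=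
  ∀ (i : ℕ) (v : V.obj (FI.of i)), v ≠ 0 →
    ∀ α : FI.of i ⟶ FI.of (i + 1), (V.map α) v ≠ 0


instance (k : Type) [CommRing k] : HasFiniteBiproducts (FIMod k) :=
  Abelian.hasFiniteBiproducts

variable (k : Type) [CommRing k]

/-- The free (representable) `FI`-module `M(i)`, the linearization of `FI(i,−)`. -/
noncomputable def Mrep (i : ℕ) : FIMod k where
  obj n := ModuleCat.of k ((Fin i ↪ Fin n.n) →₀ k)
  map {m n} f := ModuleCat.ofHom (Finsupp.lmapDomain k k fun (e : Fin i ↪ Fin m.n) => e.trans f)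
  map_id n := by
    have : (fun e : Fin i ↪ Fin n.n => e.trans (𝟙 n)) = id := by
      funext e; ext x; rfl
    show ModuleCat.ofHom (Finsupp.lmapDomain k k _) = _
    rw [this, Finsupp.lmapDomain_id]
    rfl
  map_comp {a b c} f g := by
    show ModuleCat.ofHom (Finsupp.lmapDomain k k _) = _
    have : (fun e : Fin i ↪ Fin a.n => e.trans (f ≫ g))
        = (fun e : Fin i ↪ Fin b.n => e.trans g) ∘ (fun e => e.trans f) := by
      funext e; ext x; rfl
    rw [this, Finsupp.lmapDomain_comp]
    rfl

lemma FI.le_of_hom {m n : FI} (f : m ⟶ n) : m.n ≤ n.n := by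
  simpa using Fintype.card_le_of_embedding (f : Fin m.n ↪ Fin n.n)

/-- The submodule `(JV)_n ⊆ V_n` spanned by images from strictly lower degrees. -/
def Jsub {k : Type} [CommRing k] (V : FIMod k) (n : FI) : Submodule k (V.obj n) :=
  ⨆ (m : FI) (_ : m.n < n.n) (f : m ⟶ n), LinearMap.range (V.map f).hom

lemma Jsub_le_comap {k : Type} [CommRing k] (V : FIMod k) {m n : FI} (f : m ⟶ n) :
    Jsub V m ≤ (Jsub V n).comap (V.map f).hom := by
  refine iSup_le fun m' => iSup_le fun hm' => iSup_le fun g => ?_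
  rintro x ⟨y, rfl⟩
  simp only [Submodule.mem_comap]
  have h1 : (V.map f).hom ((V.map g).hom y) = (V.map (g ≫ f)).hom y := by
    rw [V.map_comp]; rfl
  rw [h1]
  have h2 : m'.n < n.n := lt_of_lt_of_le hm' (FI.le_of_hom f)
  refine Submodule.mem_iSup_of_mem m' ?_
  refine Submodule.mem_iSup_of_mem h2 ?_
  exact Submodule.mem_iSup_of_mem (g ≫ f) ⟨y, rfl⟩

/-- The degreewise quotient `H₀(V) = V/JV` as an `FI`-module. -/
noncomputable def H0obj {k : Type} [CommRing k] (V : FIMod k) : FIMod k where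
  obj n := ModuleCat.of k (V.obj n ⧸ Jsub V n)
  map {m n} f := ModuleCat.ofHom (Submodule.mapQ _ _ (V.map f).hom (Jsub_le_comap V f))
  map_id n := by
    have h : V.map (𝟙 n) = 𝟙 (V.obj n) := V.map_id n
    apply ModuleCat.hom_ext
    refine Submodule.linearMap_qext _ ?_
    ext x
    show Submodule.Quotient.mk ((V.map (𝟙 n)).hom x) = _
    rw [h]
    rfl
  map_comp {a b c} f g := by
    have h : V.map (f ≫ g) = V.map f ≫ V.map g := V.map_comp f g
    apply ModuleCat.hom_ext
    refine Submodule.linearMap_qext _ ?_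
    ext x
    show Submodule.Quotient.mk ((V.map (f ≫ g)).hom x) = _
    rw [h]
    rfl

/-- The functor `H₀ = ℂ̃₀ ⊗_{ℂ̃} − : FI-Mod → FI-Mod`. -/
noncomputable def H0Functor (k : Type) [CommRing k] : FIMod k ⥤ FIMod k where
  obj := H0obj
  map {V W} φ :=
    { app := fun n => ModuleCat.ofHom (Submodule.mapQ _ _ (φ.app n).hom (by
        refine iSup_le fun m => iSup_le fun hm => iSup_le fun g => ?_
        rintro x ⟨y, rfl⟩
        simp only [Submodule.mem_comap]
        have h1 : (φ.app n).hom ((V.map g).hom y) = (W.map g).hom ((φ.app m).hom y) :=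
          LinearMap.congr_fun (congrArg ModuleCat.Hom.hom (φ.naturality g)) y
        rw [h1]
        refine Submodule.mem_iSup_of_mem m (Submodule.mem_iSup_of_mem hm ?_)
        exact Submodule.mem_iSup_of_mem g ⟨_, rfl⟩)),
      naturality := by
        intro m n f
        apply ModuleCat.hom_ext
        refine Submodule.linearMap_qext _ ?_
        ext x
        have h : (φ.app n).hom ((V.map f).hom x) = (W.map f).hom ((φ.app m).hom x) :=
          LinearMap.congr_fun (congrArg ModuleCat.Hom.hom (φ.naturality f)) x
        show Submodule.Quotient.mk ((φ.app n).hom ((V.map f).hom x)) = _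
        rw [h]
        rfl }
  map_id V := by
    ext n : 2
    apply ModuleCat.hom_ext
    refine Submodule.linearMap_qext _ ?_
    ext x
    rfl
  map_comp {U V W} φ ψ := by
    ext n : 2
    apply ModuleCat.hom_ext
    refine Submodule.linearMap_qext _ ?_
    ext x
    rfl

instance (k : Type) [CommRing k] : (H0Functor k).Additive where
  map_add := by
    intro V W φ ψ
    ext n : 2
    apply ModuleCat.hom_ext
    refine Submodule.linearMap_qext _ ?_
    ext x
    show Submodule.Quotient.mk ((φ.app n).hom x + (ψ.app n).hom x) =
      (((H0Functor k).map φ).app n).hom (Submodule.Quotient.mk x) +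
      (((H0Functor k).map ψ).app n).hom (Submodule.Quotient.mk x)
    rw [Submodule.Quotient.mk_add]
    rfl

/-- The homology functor `H_s(−) = Tor_s^{ℂ̃}(ℂ̃₀, −)`, as the `s`-th left derived
functor of `H₀`. -/
noncomputable def Hs (k : Type) [CommRing k] [EnoughProjectives (FIMod k)] (s : ℕ) :
    FIMod k ⥤ FIMod k :=
  (H0Functor k).leftDerived s

/-- Strictly monotone injections `[i] → [n]`, a set of representatives for the orbits of
the right action of `S_i` on `FI(i,n)`. -/
def OrdInj (i n : ℕ) : Type := {e : Fin i ↪ Fin n // StrictMono e}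

noncomputable instance (i n : ℕ) : Fintype (OrdInj i n) := by
  classical
  unfold OrdInj
  infer_instance

/-- The canonical map `⊕_{e ∈ OrdInj(i,n)} V_i → V_n`, `(v_e) ↦ Σ_e e·v_e`.
It is bijective for every `n` exactly when `V` is the induced module
`ℂ̃ ⊗_{k[S_i]} V_i`. -/
noncomputable def basicMap {k : Type} [CommRing k] (V : FIMod k) (i n : ℕ) :
    (OrdInj i n → V.obj (FI.of i)) →ₗ[k] V.obj (FI.of n) :=
  ∑ e : OrdInj i n, (V.map (e.1 : FI.of i ⟶ FI.of n)).hom.comp (LinearMap.proj e)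

/-- `V` is (isomorphic to) a basic `♯`-filtered module `ℂ̃ ⊗_{k[S_i]} T` with `T = V_i`. -/
def BasicSharp {k : Type} [CommRing k] (V : FIMod k) (i : ℕ) : Prop :=
  (∀ j : ℕ, j < i → Subsingleton (V.obj (FI.of j))) ∧
    ∀ n : ℕ, Function.Bijective (basicMap V i n)

/-- `V` admits a filtration of length `m` whose successive quotients are basic
`♯`-filtered modules. -/
def SharpChain {k : Type} [CommRing k] : ℕ → FIMod k → Prop
  | 0, V => IsZero V
  | m + 1, V => ∃ (U W : FIMod k) (f : U ⟶ V) (g : V ⟶ W) (w : f ≫ g = 0),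
      (ShortComplex.mk f g w).ShortExact ∧ SharpChain m U ∧ ∃ i, BasicSharp W i

/-- `V` is a `♯`-filtered `FI`-module. -/
def SharpFiltered {k : Type} [CommRing k] (V : FIMod k) : Prop :=
  ∃ m, SharpChain m V

/-- `pdLE n M` : `M` has projective dimension `≤ n`. -/
noncomputable def pdLE {C : Type*} [Category C] [Abelian C] : ℕ → C → Prop
  | 0, M => Projective M
  | n + 1, M => ∃ (P : C) (f : P ⟶ M), Projective P ∧ Epi f ∧ pdLE n (kernel f)

/-- The `d`-th iterated shift `Σ_d V`. -/
def shiftIter (k : Type) [CommRing k] : ℕ → FIMod k → FIMod k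
  | 0, V => V
  | d + 1, V => (shiftF k).obj (shiftIter k d V)

/-- A permutation of `[i]` as a morphism in `FI`. -/
def permHom (i : ℕ) (g : Equiv.Perm (Fin i)) : FI.of i ⟶ FI.of i := g.toEmbedding

/-- The representation of the symmetric group `S_i` on `V_i` coming from the
`FI`-module structure. -/
def permRep {k : Type} [CommRing k] (V : FIMod k) (i : ℕ) :
    Representation k (Equiv.Perm (Fin i)) (V.obj (FI.of i)) where
  toFun g := (V.map (permHom i g)).hom
  map_one' := by
    have h1 : permHom i 1 = 𝟙 (FI.of i) := rfl
    show (V.map (permHom i 1)).hom = (1 : Module.End k (V.obj (FI.of i)))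
    rw [h1, V.map_id]; rfl
  map_mul' g h := by
    have h1 : permHom i (g * h) = permHom i h ≫ permHom i g := rfl
    show (V.map (permHom i (g * h))).hom = (V.map (permHom i h) ≫ V.map (permHom i g)).hom
    rw [h1, V.map_comp]


namespace Stmt3

open Finsupp

lemma extEmb_eq_zero_iff {m n : ℕ} (f : Fin m ↪ Fin n) (z : Fin (m + 1)) :
    extEmb f z = 0 ↔ z = 0 := by
  induction z using Fin.cases with
  | zero => simp
  | succ y => simp [Fin.succ_ne_zero]

lemma extEmb_pred {m n : ℕ} (f : Fin m ↪ Fin n) (z : Fin (m + 1)) (hz : z ≠ 0)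
    (h2 : extEmb f z ≠ 0) : (extEmb f z).pred h2 = f (z.pred hz) := by
  have h3 : extEmb f z = (f (z.pred hz)).succ := by
    conv_lhs => rw [← Fin.succ_pred z hz]
    exact extEmb_succ f _
  apply Fin.succ_injective
  rw [Fin.succ_pred, h3]

/-- Post-compose an embedding with `Fin.succ`. -/
def succE {m n : ℕ} (e : Fin m ↪ Fin n) : Fin m ↪ Fin (n + 1) :=
  e.trans ⟨Fin.succ, Fin.succ_injective n⟩

@[simp] lemma succE_apply {m n : ℕ} (e : Fin m ↪ Fin n) (x : Fin m) :
    succE e x = (e x).succ := rfl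

/-- Insert `0` at position `r`. -/
def insE {j n : ℕ} (r : Fin (j + 1)) (d : Fin j ↪ Fin n) : Fin (j + 1) ↪ Fin (n + 1) :=
  (finSuccEquiv' r).toEmbedding.trans (d.optionMap.trans (finSuccEquiv n).symm.toEmbedding)

@[simp] lemma insE_self {j n : ℕ} (r : Fin (j + 1)) (d : Fin j ↪ Fin n) :
    insE r d r = 0 := by
  simp [insE, Function.Embedding.optionMap, Function.Embedding.trans]

@[simp] lemma insE_succAbove {j n : ℕ} (r : Fin (j + 1)) (d : Fin j ↪ Fin n) (y : Fin j) :
    insE r d (r.succAbove y) = (d y).succ := by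
  simp [insE, Function.Embedding.optionMap, Function.Embedding.trans]

lemma insE_eq_zero_iff {j n : ℕ} (r : Fin (j + 1)) (d : Fin j ↪ Fin n) (x : Fin (j + 1)) :
    insE r d x = 0 ↔ x = r := by
  refine Fin.succAboveCases r ?_ ?_ x
  · simp
  · intro y
    simp [Fin.succ_ne_zero, Fin.succAbove_ne r y]

/-- Remove the (missed) value `0`. -/
def downE {m n : ℕ} (e : Fin m ↪ Fin (n + 1)) (h : ∀ x, e x ≠ 0) : Fin m ↪ Fin n :=
  ⟨fun x => (e x).pred (h x), fun a b hab => e.injective (by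
    have h2 := congrArg Fin.succ hab
    rwa [Fin.succ_pred, Fin.succ_pred] at h2)⟩

@[simp] lemma downE_apply {m n : ℕ} (e : Fin m ↪ Fin (n + 1)) (h : ∀ x, e x ≠ 0) (x : Fin m) :
    downE e h x = (e x).pred (h x) := rfl

/-- Remove position `r` (which hits `0`). -/
def sideE {j n : ℕ} (e : Fin (j + 1) ↪ Fin (n + 1)) (r : Fin (j + 1)) (h : e r = 0) :
    Fin j ↪ Fin n :=
  ⟨fun y => (e (r.succAbove y)).pred
      (fun h0 => Fin.succAbove_ne r y (e.injective (h0.trans h.symm))),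
   fun a b hab => Fin.succAbove_right_injective (p := r) (e.injective (by
    have h2 := congrArg Fin.succ hab
    rwa [Fin.succ_pred, Fin.succ_pred] at h2))⟩

@[simp] lemma sideE_apply {j n : ℕ} (e : Fin (j + 1) ↪ Fin (n + 1)) (r : Fin (j + 1))
    (h : e r = 0) (y : Fin j) :
    sideE e r h y = (e (r.succAbove y)).pred
      (fun h0 => Fin.succAbove_ne r y (e.injective (h0.trans h.symm))) := rfl

variable (k : Type) [CommRing k] (j : ℕ)

/-- The natural inclusion `M(j+1) → Σ M(j+1)`. -/
noncomputable def αN : Mrep k (j + 1) ⟶ (shiftF k).obj (Mrep k (j + 1)) where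
  app n := ModuleCat.ofHom (Finsupp.lmapDomain k k (succE (m := j + 1) (n := n.n)) :
    ((Fin (j + 1) ↪ Fin n.n) →₀ k) →ₗ[k] ((Fin (j + 1) ↪ Fin (n.n + 1)) →₀ k))
  naturality m n f := by
    apply ModuleCat.hom_ext
    refine Finsupp.lhom_ext fun (e : Fin (j + 1) ↪ Fin m.n) (a : k) => ?_
    show Finsupp.lmapDomain k k succE
        (Finsupp.lmapDomain k k (fun e : Fin (j + 1) ↪ Fin m.n => e.trans f) (single e a))
      = Finsupp.lmapDomain k k (fun e : Fin (j + 1) ↪ Fin (m.n + 1) => e.trans (extEmb f))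
          (Finsupp.lmapDomain k k succE (single e a))
    simp only [lmapDomain_apply, mapDomain_single]
    have hE : succE (e.trans f) = (succE e).trans (extEmb f) :=
      DFunLike.ext _ _ fun x => by simp [Function.Embedding.trans]
    rw [hE]

/-- The natural maps `M(j) → Σ M(j+1)`, one for each `r`. -/
noncomputable def βN (r : Fin (j + 1)) : Mrep k j ⟶ (shiftF k).obj (Mrep k (j + 1)) where
  app n := ModuleCat.ofHom (Finsupp.lmapDomain k k (insE (n := n.n) r) :
    ((Fin j ↪ Fin n.n) →₀ k) →ₗ[k] ((Fin (j + 1) ↪ Fin (n.n + 1)) →₀ k))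
  naturality m n f := by
    apply ModuleCat.hom_ext
    refine Finsupp.lhom_ext fun (d : Fin j ↪ Fin m.n) (a : k) => ?_
    show Finsupp.lmapDomain k k (insE r)
        (Finsupp.lmapDomain k k (fun e : Fin j ↪ Fin m.n => e.trans f) (single d a))
      = Finsupp.lmapDomain k k (fun e : Fin (j + 1) ↪ Fin (m.n + 1) => e.trans (extEmb f))
          (Finsupp.lmapDomain k k (insE r) (single d a))
    simp only [lmapDomain_apply, mapDomain_single]
    have hE : insE r (d.trans f) = (insE r d).trans (extEmb f) := by
      refine DFunLike.ext _ _ fun x => ?_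
      refine Fin.succAboveCases r ?_ ?_ x
      · show insE r (d.trans f) r = extEmb f (insE r d r)
        simp
      · intro y
        show insE r (d.trans f) (r.succAbove y) = extEmb f (insE r d (r.succAbove y))
        simp [Function.Embedding.trans]
    rw [hE]

/-- The projection `Σ M(j+1) → M(j+1)` (kill generators hitting `0`). -/
noncomputable def πmap (n : ℕ) :
    ((Fin (j + 1) ↪ Fin (n + 1)) →₀ k) →ₗ[k] ((Fin (j + 1) ↪ Fin n) →₀ k) :=
  Finsupp.lsum k fun e =>
    if h : ∀ x, e x ≠ 0 then Finsupp.lsingle (downE e h) else 0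

@[simp] lemma πmap_single_pos (n : ℕ) (e : Fin (j + 1) ↪ Fin (n + 1)) (a : k)
    (h : ∀ x, e x ≠ 0) : πmap k j n (single e a) = single (downE e h) a := by
  rw [πmap, lsum_single, dif_pos h, lsingle_apply]

@[simp] lemma πmap_single_neg (n : ℕ) (e : Fin (j + 1) ↪ Fin (n + 1)) (a : k)
    (h : ¬ ∀ x, e x ≠ 0) : πmap k j n (single e a) = 0 := by
  rw [πmap, lsum_single, dif_neg h]; rfl

/-- The projections `Σ M(j+1) → M(j)` (extract generators hitting `0` at `r`). -/
noncomputable def ρmap (r : Fin (j + 1)) (n : ℕ) :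
    ((Fin (j + 1) ↪ Fin (n + 1)) →₀ k) →ₗ[k] ((Fin j ↪ Fin n) →₀ k) :=
  Finsupp.lsum k fun e =>
    if h : e r = 0 then Finsupp.lsingle (sideE e r h) else 0

@[simp] lemma ρmap_single_pos (r : Fin (j + 1)) (n : ℕ) (e : Fin (j + 1) ↪ Fin (n + 1)) (a : k)
    (h : e r = 0) : ρmap k j r n (single e a) = single (sideE e r h) a := by
  rw [ρmap, lsum_single, dif_pos h, lsingle_apply]

@[simp] lemma ρmap_single_neg (r : Fin (j + 1)) (n : ℕ) (e : Fin (j + 1) ↪ Fin (n + 1)) (a : k)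
    (h : ¬ e r = 0) : ρmap k j r n (single e a) = 0 := by
  rw [ρmap, lsum_single, dif_neg h]; rfl

/-- The natural projection `Σ M(j+1) → M(j+1)`. -/
noncomputable def πN : (shiftF k).obj (Mrep k (j + 1)) ⟶ Mrep k (j + 1) where
  app n := ModuleCat.ofHom (πmap k j n.n)
  naturality m n f := by
    apply ModuleCat.hom_ext
    refine Finsupp.lhom_ext fun (e : Fin (j + 1) ↪ Fin (m.n + 1)) (a : k) => ?_
    show πmap k j n.n
        (Finsupp.lmapDomain k k (fun e : Fin (j + 1) ↪ Fin (m.n + 1) => e.trans (extEmb f))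
          (single e a))
      = Finsupp.lmapDomain k k (fun e : Fin (j + 1) ↪ Fin m.n => e.trans f)
          (πmap k j m.n (single e a))
    simp only [lmapDomain_apply, mapDomain_single]
    by_cases h : ∀ x, e x ≠ 0
    · have h' : ∀ x, (e.trans (extEmb f)) x ≠ 0 := fun x h0 =>
        h x ((extEmb_eq_zero_iff f (e x)).mp h0)
      rw [πmap_single_pos k j m.n e a h, πmap_single_pos k j n.n _ a h',
        mapDomain_single]
      congr 1
      refine DFunLike.ext _ _ fun x => ?_
      exact extEmb_pred f (e x) (h x) (h' x)
    · have h' : ¬ ∀ x, (e.trans (extEmb f)) x ≠ 0 := by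
        intro h2
        push_neg at h
        obtain ⟨x, hx⟩ := h
        exact h2 x (by show extEmb f (e x) = 0; rw [hx]; rfl)
      rw [πmap_single_neg k j m.n e a h, πmap_single_neg k j n.n _ a h']
      simp

/-- The natural projections `Σ M(j+1) → M(j)`, one for each `r`. -/
noncomputable def ρN (r : Fin (j + 1)) : (shiftF k).obj (Mrep k (j + 1)) ⟶ Mrep k j where
  app n := ModuleCat.ofHom (ρmap k j r n.n)
  naturality m n f := by
    apply ModuleCat.hom_ext
    refine Finsupp.lhom_ext fun (e : Fin (j + 1) ↪ Fin (m.n + 1)) (a : k) => ?_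
    show ρmap k j r n.n
        (Finsupp.lmapDomain k k (fun e : Fin (j + 1) ↪ Fin (m.n + 1) => e.trans (extEmb f))
          (single e a))
      = Finsupp.lmapDomain k k (fun e : Fin j ↪ Fin m.n => e.trans f)
          (ρmap k j r m.n (single e a))
    simp only [lmapDomain_apply, mapDomain_single]
    by_cases h : e r = 0
    · have h' : (e.trans (extEmb f)) r = 0 := by
        show extEmb f (e r) = 0
        rw [h]; rfl
      rw [ρmap_single_pos k j r m.n e a h, ρmap_single_pos k j r n.n _ a h',
        mapDomain_single]
      congr 1
      refine DFunLike.ext _ _ fun y => ?_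
      exact extEmb_pred f (e (r.succAbove y))
        (fun h0 => Fin.succAbove_ne r y (e.injective (h0.trans h.symm)))
        (fun h0 => Fin.succAbove_ne r y (e.injective (((extEmb_eq_zero_iff f _).mp h0).trans h.symm)))
    · have h' : ¬ (e.trans (extEmb f)) r = 0 := fun h0 =>
        h ((extEmb_eq_zero_iff f (e r)).mp h0)
      rw [ρmap_single_neg k j r m.n e a h, ρmap_single_neg k j r n.n _ a h']
      simp

lemma α_π : αN k j ≫ πN k j = 𝟙 (Mrep k (j + 1)) := by
  ext n : 2
  apply ModuleCat.hom_ext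
  refine Finsupp.lhom_ext fun (e : Fin (j + 1) ↪ Fin n.n) (a : k) => ?_
  show πmap k j n.n (Finsupp.lmapDomain k k succE (single e a)) = single e a
  rw [lmapDomain_apply, mapDomain_single,
    πmap_single_pos k j n.n _ a (fun x => Fin.succ_ne_zero (e x))]
  have hE : downE (succE e) (fun x => Fin.succ_ne_zero (e x)) = e :=
    DFunLike.ext _ _ fun x => by show Fin.pred (e x).succ (Fin.succ_ne_zero _) = e x; exact Fin.pred_succ _
  rw [hE]

lemma α_ρ (r : Fin (j + 1)) : αN k j ≫ ρN k j r = 0 := by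
  ext n : 2
  apply ModuleCat.hom_ext
  refine Finsupp.lhom_ext fun (e : Fin (j + 1) ↪ Fin n.n) (a : k) => ?_
  show ρmap k j r n.n (Finsupp.lmapDomain k k succE (single e a)) = 0
  rw [lmapDomain_apply, mapDomain_single,
    ρmap_single_neg k j r n.n _ a (Fin.succ_ne_zero (e r))]

lemma β_π (r : Fin (j + 1)) : βN k j r ≫ πN k j = 0 := by
  ext n : 2
  apply ModuleCat.hom_ext
  refine Finsupp.lhom_ext fun (d : Fin j ↪ Fin n.n) (a : k) => ?_
  show πmap k j n.n (Finsupp.lmapDomain k k (insE r) (single d a)) = 0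
  rw [lmapDomain_apply, mapDomain_single,
    πmap_single_neg k j n.n _ a (fun h => h r (by simp))]

lemma β_ρ (r r' : Fin (j + 1)) :
    βN k j r ≫ ρN k j r' = if r = r' then 𝟙 (Mrep k j) else 0 := by
  ext n : 2
  apply ModuleCat.hom_ext
  refine Finsupp.lhom_ext fun (d : Fin j ↪ Fin n.n) (a : k) => ?_
  by_cases hrr : r = r'
  · subst hrr
    rw [if_pos rfl]
    show ρmap k j r n.n (Finsupp.lmapDomain k k (insE r) (single d a)) = single d a
    rw [lmapDomain_apply, mapDomain_single,
      ρmap_single_pos k j r n.n _ a (insE_self r d)]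
    have hE : sideE (insE r d) r (insE_self r d) = d := by
      refine DFunLike.ext _ _ fun y => ?_
      apply Fin.succ_injective
      simp only [sideE_apply, Fin.succ_pred, insE_succAbove]
    rw [hE]
  · rw [if_neg hrr]
    show ρmap k j r' n.n (Finsupp.lmapDomain k k (insE r) (single d a)) = 0
    rw [lmapDomain_apply, mapDomain_single,
      ρmap_single_neg k j r' n.n _ a (by
        rw [insE_eq_zero_iff]
        exact fun h => hrr h.symm)]

lemma sum_id :
    πN k j ≫ αN k j + ∑ r : Fin (j + 1), ρN k j r ≫ βN k j r
      = 𝟙 ((shiftF k).obj (Mrep k (j + 1))) := by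
  ext n : 2
  rw [NatTrans.app_add, NatTrans.app_sum]
  apply ModuleCat.hom_ext
  rw [ModuleCat.hom_add, ModuleCat.hom_sum]
  show Finsupp.lmapDomain k k succE ∘ₗ πmap k j n.n
      + ∑ r : Fin (j + 1), Finsupp.lmapDomain k k (insE r) ∘ₗ ρmap k j r n.n = LinearMap.id
  refine Finsupp.lhom_ext fun (e : Fin (j + 1) ↪ Fin (n.n + 1)) (a : k) => ?_
  rw [LinearMap.add_apply, LinearMap.coe_sum, Finset.sum_apply]
  show Finsupp.lmapDomain k k succE (πmap k j n.n (single e a))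
      + ∑ r : Fin (j + 1), Finsupp.lmapDomain k k (insE r) (ρmap k j r n.n (single e a))
    = single e a
  by_cases h : ∀ x, e x ≠ 0
  · have h1 : Finsupp.lmapDomain k k succE (πmap k j n.n (single e a)) = single e a := by
      rw [πmap_single_pos k j n.n e a h, lmapDomain_apply, mapDomain_single]
      have hE : succE (downE e h) = e := DFunLike.ext _ _ fun x => by
        simp [Fin.succ_pred]
      rw [hE]
    have h2 : ∀ r : Fin (j + 1),
        Finsupp.lmapDomain k k (insE r) (ρmap k j r n.n (single e a)) = 0 := by
      intro r
      rw [ρmap_single_neg k j r n.n e a (h r)]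
      simp
    rw [h1, Finset.sum_eq_zero fun r _ => h2 r, add_zero]
  · push_neg at h
    obtain ⟨r₀, hr₀⟩ := h
    have h1 : Finsupp.lmapDomain k k succE (πmap k j n.n (single e a)) = 0 := by
      rw [πmap_single_neg k j n.n e a (by push_neg; exact ⟨r₀, hr₀⟩)]
      simp
    have h2 : Finsupp.lmapDomain k k (insE r₀) (ρmap k j r₀ n.n (single e a))
        = single e a := by
      rw [ρmap_single_pos k j r₀ n.n e a hr₀, lmapDomain_apply, mapDomain_single]
      have hE : insE r₀ (sideE e r₀ hr₀) = e := by
        refine DFunLike.ext _ _ fun x => ?_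
        refine Fin.succAboveCases r₀ ?_ ?_ x
        · simp [hr₀]
        · intro y
          simp [Fin.succ_pred]
      rw [hE]
    have h3 : ∀ r : Fin (j + 1), r ≠ r₀ →
        Finsupp.lmapDomain k k (insE r) (ρmap k j r n.n (single e a)) = 0 := by
      intro r hr
      rw [ρmap_single_neg k j r n.n e a (fun h0 => hr (e.injective (h0.trans hr₀.symm)))]
      simp
    rw [h1, zero_add,
      Finset.sum_eq_single r₀ (fun r _ hr => h3 r hr) (by simp), h2]

/-- The main isomorphism for `i = j + 1`. -/
noncomputable def mainIso :
    (shiftF k).obj (Mrep k (j + 1)) ≅ (Mrep k (j + 1)) ⊞ (⨁ fun _ : Fin (j + 1) => Mrep k j) where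
  hom := biprod.lift (πN k j) (biproduct.lift fun r => ρN k j r)
  inv := biprod.desc (αN k j) (biproduct.desc fun r => βN k j r)
  hom_inv_id := by
    rw [biprod.lift_desc, biproduct.lift_desc, sum_id]
  inv_hom_id := by
    apply biprod.hom_ext'
    · rw [biprod.inl_desc_assoc, Category.comp_id]
      apply biprod.hom_ext
      · rw [Category.assoc, biprod.lift_fst, α_π, biprod.inl_fst]
      · rw [Category.assoc, biprod.lift_snd, biprod.inl_snd]
        apply biproduct.hom_ext
        intro r
        rw [Category.assoc, biproduct.lift_π, α_ρ, zero_comp]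
    · rw [biprod.inr_desc_assoc, Category.comp_id]
      apply biproduct.hom_ext'
      intro r
      rw [biproduct.ι_desc_assoc]
      apply biprod.hom_ext
      · rw [Category.assoc, Category.assoc, biprod.lift_fst, biprod.inr_fst, comp_zero, β_π]
      · rw [Category.assoc, Category.assoc, biprod.lift_snd, biprod.inr_snd, Category.comp_id]
        apply biproduct.hom_ext
        intro r'
        rw [Category.assoc, biproduct.lift_π, β_ρ, biproduct.ι_π]
        by_cases hrr : r = r'
        · subst hrr
          rw [if_pos rfl, dif_pos rfl, eqToHom_refl]
        · rw [if_neg hrr, dif_neg hrr]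

lemma stmt3_succ (k : Type) [CommRing k] (j : ℕ) :
    Nonempty ((shiftF k).obj (Mrep k (j + 1)) ≅
      (Mrep k (j + 1)) ⊞ (⨁ fun _ : Fin (j + 1) => Mrep k j)) :=
  ⟨mainIso k j⟩

/-- `Σ M(0) ≅ M(0)`. -/
noncomputable def isoZero : (shiftF k).obj (Mrep k 0) ≅ Mrep k 0 :=
  NatIso.ofComponents
    (fun n => (Finsupp.domLCongr (M := k) (R := k)
      (Equiv.ofUnique (Fin 0 ↪ Fin (n.n + 1)) (Fin 0 ↪ Fin n.n))).toModuleIso)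
    (fun {m n} f => by
      apply ModuleCat.hom_ext
      refine Finsupp.lhom_ext fun (e : Fin 0 ↪ Fin (m.n + 1)) (a : k) => ?_
      show (Finsupp.domLCongr (M := k) (R := k)
            (Equiv.ofUnique (Fin 0 ↪ Fin (n.n + 1)) (Fin 0 ↪ Fin n.n)))
          (Finsupp.lmapDomain k k (fun e : Fin 0 ↪ Fin (m.n + 1) => e.trans (extEmb f))
            (single e a))
        = Finsupp.lmapDomain k k (fun e : Fin 0 ↪ Fin m.n => e.trans f)
            ((Finsupp.domLCongr (M := k) (R := k)
              (Equiv.ofUnique (Fin 0 ↪ Fin (m.n + 1)) (Fin 0 ↪ Fin m.n))) (single e a))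
      simp only [lmapDomain_apply, mapDomain_single, Finsupp.domLCongr_single]
      congr 1
      exact Subsingleton.elim _ _)

/-- `M(0) ≅ M(0) ⊞ 0`. -/
noncomputable def isoPad : Mrep k 0 ≅ (Mrep k 0) ⊞ (⨁ fun _ : Fin 0 => Mrep k 0) where
  hom := biprod.inl
  inv := biprod.fst
  hom_inv_id := biprod.inl_fst
  inv_hom_id := by
    apply biprod.hom_ext
    · rw [Category.assoc, biprod.inl_fst, Category.comp_id, Category.id_comp]
    · exact biproduct.hom_ext _ _ fun r => r.elim0

end Stmt3

/-- `Σ M(i) ≅ M(i) ⊕ M(i-1)^{⊕ i}`. -/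
theorem stmt_3 (k : Type) [CommRing k] (i : ℕ) :
    Nonempty ((shiftF k).obj (Mrep k i) ≅
      (Mrep k i) ⊞ (⨁ fun _ : Fin i => Mrep k (i - 1))) := by
  cases i with
  | zero => exact ⟨(Stmt3.isoZero k).trans (Stmt3.isoPad k)⟩
  | succ j => exact Stmt3.stmt3_succ k j
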